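/- Let (H, Δ) be a Hopf algebra with center Z. Define L = {y ∈ H : Δ(y) ∈ H ⊗ Z}. Then L is a subalgebra of H contained in Z, and moreover Δ(L) ⊆ Z ⊗ Z. -/

import Mathlib

set_option maxHeartbeats 1000000
set_option synthInstance.maxHeartbeats 400000

open TensorProduct Coalgebra HopfAlgebra

section Aux

variable {k H : Type*} [Field k] [Ring H] [HopfAlgebra k H]

/-- Elements of `H ⊗ Z` commute with `1 ⊗ x` for every `x`. -/
private lemma aux_hB (u : H ⊗[k] (Subalgebra.center k H)) (x : H) :
    ((1:H) ⊗ₜ[k] x) * (TensorProduct.map LinearMap.id (Subalgebra.center k H).val.toLinearMap u) =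
    (TensorProduct.map LinearMap.id (Subalgebra.center k H).val.toLinearMap u) * ((1:H) ⊗ₜ[k] x) := by
  induction u using TensorProduct.induction_on with
  | zero => simp
  | tmul m z =>
      simp [Algebra.TensorProduct.tmul_mul_tmul, Subalgebra.mem_center_iff.mp z.2 x]
  | add a b ha hb => simp only [map_add, add_mul, mul_add, ha, hb]

/-- If `Δ y ∈ H ⊗ Z` then `y ∈ Z`. -/
private lemma aux_mem_center {y : H} (u : H ⊗[k] (Subalgebra.center k H))
    (hu : TensorProduct.map LinearMap.id (Subalgebra.center k H).val.toLinearMap u = Coalgebra.comul (R := k) y) :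
    y ∈ Subalgebra.center k H := by
  have key : ∀ v : H ⊗[k] (Subalgebra.center k H),
      (TensorProduct.lid k H) ((Coalgebra.counit (R := k) (A := H)).rTensor H
        (TensorProduct.map LinearMap.id (Subalgebra.center k H).val.toLinearMap v)) =
      (((TensorProduct.lid k (Subalgebra.center k H))
        ((Coalgebra.counit (R := k) (A := H)).rTensor (Subalgebra.center k H) v) : (Subalgebra.center k H)) : H) := by
    intro v
    induction v using TensorProduct.induction_on with
    | zero => simp
    | tmul m z => simp
    | add a b ha hb => simp only [map_add, ha, hb, Submodule.coe_add, Subalgebra.coe_add]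
  have h := key u
  rw [hu, Coalgebra.rTensor_counit_comul, TensorProduct.lid_tmul, one_smul] at h
  rw [h]
  exact Subtype.coe_prop _

/-- The Hopf-algebra identity `x ⊗ 1 = ∑ Δ(x₁) * (1 ⊗ S(x₂))`. -/
private lemma aux_key (x : H) :
    (x ⊗ₜ[k] (1:H) : H ⊗[k] H) =
    ∑ i ∈ (ℛ k x).index, Coalgebra.comul (R := k) ((ℛ k x).left i) *
      ((1:H) ⊗ₜ[k] HopfAlgebra.antipode (R := k) ((ℛ k x).right i)) := by
  have hx : ∑ i ∈ (ℛ k x).index,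
      Coalgebra.counit (R := k) ((ℛ k x).right i) • (ℛ k x).left i = x := by
    have h := Coalgebra.sum_tmul_counit_eq (R := k) (ℛ k x)
    have h2 := congrArg (TensorProduct.rid k H) h
    rw [map_sum] at h2
    simp only [TensorProduct.rid_tmul, one_smul] at h2
    exact h2
  have main := Coalgebra.sum_map_tmul_tmul_eq (R := k)
      (LinearMap.id : H →ₗ[k] H) (LinearMap.id : H →ₗ[k] H)
      (HopfAlgebra.antipode (R := k) (A := H)) x
      (repr := ℛ k x) (a₁ := fun i => ℛ k ((ℛ k x).left i))
      (a₂ := fun i => ℛ k ((ℛ k x).right i))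
  have main2 := congrArg (LinearMap.lTensor H (LinearMap.mul' k H)) main
  simp only [map_sum, LinearMap.lTensor_tmul, LinearMap.mul'_apply, LinearMap.id_coe,
    id_eq] at main2
  have step1 : (x ⊗ₜ[k] (1:H) : H ⊗[k] H) = ∑ i ∈ (ℛ k x).index,
      Coalgebra.counit (R := k) ((ℛ k x).right i) • ((ℛ k x).left i ⊗ₜ[k] (1:H)) := by
    have : ((∑ i ∈ (ℛ k x).index,
        Coalgebra.counit (R := k) ((ℛ k x).right i) • (ℛ k x).left i) ⊗ₜ[k] (1:H)
          : H ⊗[k] H) = ∑ i ∈ (ℛ k x).index,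
        Coalgebra.counit (R := k) ((ℛ k x).right i) • ((ℛ k x).left i ⊗ₜ[k] (1:H)) := by
      rw [TensorProduct.sum_tmul]
      exact Finset.sum_congr rfl fun i _ => by rw [TensorProduct.smul_tmul']
    rw [hx] at this
    exact this
  calc x ⊗ₜ[k] (1:H)
      = ∑ i ∈ (ℛ k x).index,
          Coalgebra.counit (R := k) ((ℛ k x).right i) • ((ℛ k x).left i ⊗ₜ[k] (1:H)) := step1
    _ = ∑ i ∈ (ℛ k x).index, (ℛ k x).left i ⊗ₜ[k]
          (algebraMap k H (Coalgebra.counit (R := k) ((ℛ k x).right i))) := by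
        refine Finset.sum_congr rfl fun i _ => ?_
        rw [Algebra.algebraMap_eq_smul_one, TensorProduct.tmul_smul]
    _ = ∑ i ∈ (ℛ k x).index, (ℛ k x).left i ⊗ₜ[k]
          (∑ j ∈ (ℛ k ((ℛ k x).right i)).index,
            (ℛ k ((ℛ k x).right i)).left j *
              HopfAlgebra.antipode (R := k) ((ℛ k ((ℛ k x).right i)).right j)) := by
        refine Finset.sum_congr rfl fun i _ => ?_
        rw [HopfAlgebra.sum_mul_antipode_eq_algebraMap_counit]
    _ = ∑ i ∈ (ℛ k x).index, ∑ j ∈ (ℛ k ((ℛ k x).right i)).index,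
          (ℛ k x).left i ⊗ₜ[k] ((ℛ k ((ℛ k x).right i)).left j *
            HopfAlgebra.antipode (R := k) ((ℛ k ((ℛ k x).right i)).right j)) := by
        refine Finset.sum_congr rfl fun i _ => ?_
        rw [TensorProduct.tmul_sum]
    _ = ∑ i ∈ (ℛ k x).index, ∑ j ∈ (ℛ k ((ℛ k x).left i)).index,
          (ℛ k ((ℛ k x).left i)).left j ⊗ₜ[k] ((ℛ k ((ℛ k x).left i)).right j *
            HopfAlgebra.antipode (R := k) ((ℛ k x).right i)) := main2
    _ = ∑ i ∈ (ℛ k x).index, Coalgebra.comul (R := k) ((ℛ k x).left i) *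
          ((1:H) ⊗ₜ[k] HopfAlgebra.antipode (R := k) ((ℛ k x).right i)) := by
        refine Finset.sum_congr rfl fun i _ => ?_
        rw [← (ℛ k ((ℛ k x).left i)).eq, Finset.sum_mul]
        exact Finset.sum_congr rfl fun j _ => by
          rw [Algebra.TensorProduct.tmul_mul_tmul, mul_one]

/-- If `c` commutes with all `Δ a` and all `1 ⊗ x`, it commutes with all `x ⊗ 1`. -/
private lemma aux_comm_left (c : H ⊗[k] H)
    (hA : ∀ a : H, Coalgebra.comul (R := k) a * c = c * Coalgebra.comul (R := k) a)
    (hB : ∀ x : H, ((1:H) ⊗ₜ[k] x) * c = c * ((1:H) ⊗ₜ[k] x)) (x : H) :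
    (x ⊗ₜ[k] (1:H)) * c = c * (x ⊗ₜ[k] (1:H)) := by
  rw [aux_key (k := k) x, Finset.sum_mul, Finset.mul_sum]
  refine Finset.sum_congr rfl fun i _ => ?_
  rw [mul_assoc, hB, ← mul_assoc, hA, mul_assoc]

/-- If `c ∈ H ⊗ Z` commutes with all `x ⊗ 1`, then `c ∈ Z ⊗ Z`. -/
private lemma aux_extract (u : H ⊗[k] (Subalgebra.center k H))
    (hcomm : ∀ x : H, (x ⊗ₜ[k] (1:H)) * (TensorProduct.map LinearMap.id (Subalgebra.center k H).val.toLinearMap u) =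
      (TensorProduct.map LinearMap.id (Subalgebra.center k H).val.toLinearMap u) * (x ⊗ₜ[k] (1:H))) :
    TensorProduct.map LinearMap.id (Subalgebra.center k H).val.toLinearMap u ∈
      LinearMap.range (TensorProduct.map (Subalgebra.center k H).val.toLinearMap (Subalgebra.center k H).val.toLinearMap) := by
  classical
  let b := Module.Basis.ofVectorSpace k (Subalgebra.center k H)
  let E : H ⊗[k] (Subalgebra.center k H) ≃ₗ[k] (Module.Basis.ofVectorSpaceIndex k (Subalgebra.center k H) →₀ H) :=
    (TensorProduct.congr (LinearEquiv.refl k H) b.repr).trans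
      (TensorProduct.finsuppScalarRight k k H _)
  have hE : ∀ (m : H) (z : (Subalgebra.center k H)) (i), E (m ⊗ₜ[k] z) i = b.repr z i • m := by
    intro m z i
    simp [E, TensorProduct.finsuppScalarRight_apply_tmul_apply]
  have hEnat : ∀ (f : H →ₗ[k] H) (t : H ⊗[k] (Subalgebra.center k H)) (i),
      E (f.rTensor (Subalgebra.center k H) t) i = f (E t i) := by
    intro f t i
    induction t using TensorProduct.induction_on with
    | zero => simp
    | tmul m z => simp [hE]
    | add a c ha hc => simp only [map_add, Finsupp.add_apply, ha, hc]
  have hinj : Function.Injective (TensorProduct.map (LinearMap.id : H →ₗ[k] H) (Subalgebra.center k H).val.toLinearMap) := by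
    have heq : TensorProduct.map (LinearMap.id : H →ₗ[k] H) (Subalgebra.center k H).val.toLinearMap = LinearMap.lTensor H (Subalgebra.center k H).val.toLinearMap := rfl
    rw [heq]
    exact Module.Flat.lTensor_preserves_injective_linearMap _ Subtype.val_injective
  have hcentral : ∀ i, E u i ∈ Subalgebra.center k H := by
    intro i
    rw [Subalgebra.mem_center_iff]
    intro x
    have h0 : (LinearMap.mulLeft k x - LinearMap.mulRight k x).rTensor (Subalgebra.center k H) u = 0 := by
      apply hinj
      rw [map_zero]
      have expand : ∀ t : H ⊗[k] (Subalgebra.center k H),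
          TensorProduct.map LinearMap.id (Subalgebra.center k H).val.toLinearMap
            ((LinearMap.mulLeft k x - LinearMap.mulRight k x).rTensor (Subalgebra.center k H) t) =
          (x ⊗ₜ[k] (1:H)) * (TensorProduct.map LinearMap.id (Subalgebra.center k H).val.toLinearMap t) -
          (TensorProduct.map LinearMap.id (Subalgebra.center k H).val.toLinearMap t) * (x ⊗ₜ[k] (1:H)) := by
        intro t
        induction t using TensorProduct.induction_on with
        | zero => simp
        | tmul m z =>
            simp [TensorProduct.sub_tmul, Algebra.TensorProduct.tmul_mul_tmul]
        | add a c ha hc =>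
            simp only [map_add, ha, hc, add_mul, mul_add]
            abel
      rw [expand, hcomm x, sub_self]
    have hn := hEnat (LinearMap.mulLeft k x - LinearMap.mulRight k x) u i
    rw [h0] at hn
    simp only [map_zero, Finsupp.coe_zero, Pi.zero_apply, LinearMap.sub_apply,
      LinearMap.mulLeft_apply, LinearMap.mulRight_apply] at hn
    linear_combination (norm := module) -hn
  have hrepr : u = ∑ i ∈ (E u).support, (E u) i ⊗ₜ[k] b i := by
    apply E.injective
    ext j
    rw [map_sum, Finsupp.finset_sum_apply]
    have hterm : ∀ i, E ((E u) i ⊗ₜ[k] b i) j = if i = j then E u i else 0 := by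
      intro i
      rw [hE, Module.Basis.repr_self, Finsupp.single_apply]
      split <;> simp
    rw [Finset.sum_congr rfl fun i _ => hterm i, Finset.sum_ite_eq']
    split
    · rfl
    · next h => exact Finsupp.notMem_support_iff.mp h
  refine ⟨∑ i ∈ (E u).support, (⟨E u i, hcentral i⟩ : (Subalgebra.center k H)) ⊗ₜ[k] b i, ?_⟩
  rw [map_sum]
  conv_rhs => rw [hrepr, map_sum]
  exact Finset.sum_congr rfl fun i _ => by simp

end Aux

/-- For a Hopf algebra `H` with center `Z`, the set `L = {y : Δ(y) ∈ H ⊗ Z}` is a subalgebra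
of `H` contained in `Z`, and moreover `Δ(L) ⊆ Z ⊗ Z`. -/
theorem stmt3 (k H : Type*) [Field k] [Ring H] [HopfAlgebra k H] :
    ∃ L : Subalgebra k H,
      (↑L = {y : H | Coalgebra.comul (R := k) y ∈
          LinearMap.range (TensorProduct.map (LinearMap.id : H →ₗ[k] H)
            (Subalgebra.center k H).val.toLinearMap)}) ∧
      L ≤ Subalgebra.center k H ∧
      ∀ y ∈ L, Coalgebra.comul (R := k) y ∈
        LinearMap.range (TensorProduct.map (Subalgebra.center k H).val.toLinearMap
          (Subalgebra.center k H).val.toLinearMap) := by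
  classical
  have hmap : ∀ v : H ⊗[k] (Subalgebra.center k H),
      Algebra.TensorProduct.map (AlgHom.id k H) (Subalgebra.center k H).val v =
      TensorProduct.map LinearMap.id (Subalgebra.center k H).val.toLinearMap v := by
    intro v
    induction v using TensorProduct.induction_on with
    | zero => simp
    | tmul m z => simp
    | add a c ha hc => simp only [map_add, ha, hc]
  have hmem : ∀ y : H, (y ∈ Subalgebra.comap (Bialgebra.comulAlgHom k H)
      (AlgHom.range (Algebra.TensorProduct.map (AlgHom.id k H)
        (Subalgebra.center k H).val))) ↔
      Coalgebra.comul (R := k) y ∈ LinearMap.range (TensorProduct.map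
        (LinearMap.id : H →ₗ[k] H) (Subalgebra.center k H).val.toLinearMap) := by
    intro y
    rw [Subalgebra.mem_comap, AlgHom.mem_range]
    constructor
    · rintro ⟨u, hu⟩
      exact ⟨u, by rw [← hmap u]; exact hu⟩
    · rintro ⟨u, hu⟩
      exact ⟨u, by rw [hmap u]; exact hu⟩
  refine ⟨Subalgebra.comap (Bialgebra.comulAlgHom k H)
      (AlgHom.range (Algebra.TensorProduct.map (AlgHom.id k H)
        (Subalgebra.center k H).val)), ?_, ?_, ?_⟩
  · ext y
    rw [SetLike.mem_coe, hmem y]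
    rfl
  · intro y hy
    obtain ⟨u, hu⟩ := (hmem y).mp hy
    exact aux_mem_center u hu
  · intro y hy
    obtain ⟨u, hu⟩ := (hmem y).mp hy
    have hyZ : y ∈ Subalgebra.center k H := aux_mem_center u hu
    have hA : ∀ a : H, Coalgebra.comul (R := k) a *
        TensorProduct.map LinearMap.id (Subalgebra.center k H).val.toLinearMap u =
        TensorProduct.map LinearMap.id (Subalgebra.center k H).val.toLinearMap u *
          Coalgebra.comul (R := k) a := by
      intro a
      rw [hu, ← Bialgebra.comul_mul, ← Bialgebra.comul_mul,
        Subalgebra.mem_center_iff.mp hyZ a]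
    have hcomm := fun x => aux_comm_left
      (TensorProduct.map LinearMap.id (Subalgebra.center k H).val.toLinearMap u)
      hA (aux_hB u) x
    have := aux_extract u hcomm
    rwa [hu] at this
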